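/- arXiv:1209.1216 — 2 statements merged into one kernel-verified Lean document; each statement's English description precedes it below -/
import Mathlib

section
/- There exists a sequence {a_n}_{n∈ℤ₊} of complex numbers such that for every continuous function f : 𝕋 → ℂ on the unit circle 𝕋 = {z ∈ ℂ : |z| = 1}, there is a strictly increasing sequence {n_k} of positive integers with ∑_{j=0}^{n_k} a_j z^j → f(z) as k → ∞ for every z ∈ 𝕋. -/
open Filter Complex Polynomial Finset

noncomputable section
namespace Stmt5

/-- circle minus arc around `w` -/
def KS (w : ℂ) (δ : ℝ) : Set ℂ := {z : ℂ | ‖z‖ = 1 ∧ δ ≤ ‖z - w‖}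

def ApproxOn (K : Set ℂ) (g : ℂ → ℂ) : Prop :=
  ∀ ε : ℝ, 0 < ε → ∃ p : Polynomial ℂ, ∀ z ∈ K, ‖p.eval z - g z‖ ≤ ε

lemma approxOn_congr {K : Set ℂ} {g h : ℂ → ℂ} (hgh : ∀ z ∈ K, g z = h z)
    (hg : ApproxOn K g) : ApproxOn K h := fun ε hε => by
  obtain ⟨p, hp⟩ := hg ε hε
  exact ⟨p, fun z hz => (hgh z hz) ▸ hp z hz⟩

lemma approxOn_mono {K K' : Set ℂ} (hKK : K' ⊆ K) {g : ℂ → ℂ}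
    (hg : ApproxOn K g) : ApproxOn K' g := fun ε hε => by
  obtain ⟨p, hp⟩ := hg ε hε
  exact ⟨p, fun z hz => hp z (hKK hz)⟩

lemma approxOn_poly {K : Set ℂ} (q : Polynomial ℂ) : ApproxOn K (fun z => q.eval z) :=
  fun ε hε => ⟨q, fun z _ => by simp [le_of_lt hε]⟩

lemma approxOn_const {K : Set ℂ} (c : ℂ) : ApproxOn K (fun _ => c) := by
  simpa using approxOn_poly (K := K) (Polynomial.C c)

lemma approxOn_add {K : Set ℂ} {g h : ℂ → ℂ} (hg : ApproxOn K g) (hh : ApproxOn K h) :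
    ApproxOn K (fun z => g z + h z) := fun ε hε => by
  obtain ⟨p, hp⟩ := hg (ε/2) (by positivity)
  obtain ⟨q, hq⟩ := hh (ε/2) (by positivity)
  refine ⟨p + q, fun z hz => ?_⟩
  have h1 : (p+q).eval z - (g z + h z) = (p.eval z - g z) + (q.eval z - h z) := by
    simp [Polynomial.eval_add]; ring
  rw [h1]
  calc ‖(p.eval z - g z) + (q.eval z - h z)‖ ≤ ‖p.eval z - g z‖ + ‖q.eval z - h z‖ :=
        norm_add_le _ _
    _ ≤ ε/2 + ε/2 := add_le_add (hp z hz) (hq z hz)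
    _ = ε := by ring

lemma approxOn_smul {K : Set ℂ} {g : ℂ → ℂ} (c : ℂ) (hg : ApproxOn K g) :
    ApproxOn K (fun z => c * g z) := fun ε hε => by
  obtain ⟨p, hp⟩ := hg (ε / (‖c‖ + 1)) (by positivity)
  refine ⟨Polynomial.C c * p, fun z hz => ?_⟩
  have h1 : (Polynomial.C c * p).eval z - c * g z = c * (p.eval z - g z) := by
    simp; ring
  rw [h1, norm_mul]
  calc ‖c‖ * ‖p.eval z - g z‖ ≤ (‖c‖ + 1) * (ε / (‖c‖ + 1)) := by
        apply mul_le_mul (by linarith [norm_nonneg c]) (hp z hz) (norm_nonneg _) (by positivity)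
    _ = ε := by field_simp


lemma approxOn_mul {K : Set ℂ} {g h : ℂ → ℂ} {Cg Ch : ℝ}
    (hg : ApproxOn K g) (hh : ApproxOn K h)
    (hCg : ∀ z ∈ K, ‖g z‖ ≤ Cg) (hCh : ∀ z ∈ K, ‖h z‖ ≤ Ch) :
    ApproxOn K (fun z => g z * h z) := fun ε hε => by
  set Cg' : ℝ := max Cg 0 with hCg'
  set Ch' : ℝ := max Ch 0 with hCh'
  have hCg'0 : 0 ≤ Cg' := le_max_right _ _
  have hCh'0 : 0 ≤ Ch' := le_max_right _ _
  set η : ℝ := min 1 (ε / (Cg' + Ch' + 1)) with hη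
  have hη0 : 0 < η := lt_min one_pos (by positivity)
  obtain ⟨p, hp⟩ := hg η hη0
  obtain ⟨q, hq⟩ := hh η hη0
  refine ⟨p * q, fun z hz => ?_⟩
  have key : (p*q).eval z - g z * h z
      = p.eval z * (q.eval z - h z) + (p.eval z - g z) * h z := by
    simp; ring
  have hpz : ‖p.eval z‖ ≤ Cg' + 1 := by
    have := norm_sub_norm_le (p.eval z) (g z)
    have h1 : ‖g z‖ ≤ Cg' := le_trans (hCg z hz) (le_max_left _ _)
    have h2 := hp z hz
    have h3 : η ≤ 1 := min_le_left _ _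
    linarith
  have hhz : ‖h z‖ ≤ Ch' := le_trans (hCh z hz) (le_max_left _ _)
  rw [key]
  have hb : ‖p.eval z * (q.eval z - h z) + (p.eval z - g z) * h z‖
      ≤ (Cg' + 1) * η + η * Ch' := by
    calc ‖p.eval z * (q.eval z - h z) + (p.eval z - g z) * h z‖
        ≤ ‖p.eval z * (q.eval z - h z)‖ + ‖(p.eval z - g z) * h z‖ := norm_add_le _ _
      _ = ‖p.eval z‖ * ‖q.eval z - h z‖ + ‖p.eval z - g z‖ * ‖h z‖ := by
          rw [norm_mul, norm_mul]
      _ ≤ (Cg' + 1) * η + η * Ch' := by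
          gcongr
          · exact hq z hz
          · exact hp z hz
  have hfin : (Cg' + 1) * η + η * Ch' ≤ ε := by
    have h4 : η ≤ ε / (Cg' + Ch' + 1) := min_le_right _ _
    have : (Cg' + 1) * η + η * Ch' = (Cg' + Ch' + 1) * η := by ring
    rw [this]
    calc (Cg' + Ch' + 1) * η ≤ (Cg' + Ch' + 1) * (ε / (Cg' + Ch' + 1)) := by
          gcongr
      _ = ε := by field_simp
  linarith

lemma approxOn_pow {K : Set ℂ} {g : ℂ → ℂ} {C : ℝ} (hC0 : 0 ≤ C)
    (hg : ApproxOn K g) (hCg : ∀ z ∈ K, ‖g z‖ ≤ C) (k : ℕ) :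
    ApproxOn K (fun z => (g z)^k) := by
  induction k with
  | zero => simpa using (show ApproxOn K (fun _ => (1:ℂ)) from fun ε hε => ⟨1, fun z _ => by simp [le_of_lt hε]⟩)
  | succ k ih =>
      have hb : ∀ z ∈ K, ‖(g z)^k‖ ≤ C^k := fun z hz => by
        rw [norm_pow]; exact pow_le_pow_left₀ (norm_nonneg _) (hCg z hz) k
      have := approxOn_mul ih hg hb hCg
      exact fun ε hε => by
        obtain ⟨p, hp⟩ := this ε hε
        exact ⟨p, fun z hz => by simpa [pow_succ] using hp z hz⟩

lemma approxOn_sum {K : Set ℂ} {ι : Type*} (s : Finset ι) (F : ι → ℂ → ℂ)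
    (hF : ∀ i ∈ s, ApproxOn K (F i)) :
    ApproxOn K (fun z => ∑ i ∈ s, F i z) := by
  classical
  induction s using Finset.induction_on with
  | empty => simpa using (show ApproxOn K (fun _ => (0:ℂ)) from fun ε hε => ⟨0, fun z _ => by simp [le_of_lt hε]⟩)
  | insert i t hni ih =>
      have h1 : ApproxOn K (F i) := hF i (Finset.mem_insert_self i t)
      have h2 : ApproxOn K (fun z => ∑ j ∈ t, F j z) :=
        ih (fun j hj => hF j (Finset.mem_insert_of_mem hj))
      have h3 : ApproxOn K (fun z => F i z + ∑ j ∈ t, F j z) := by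
        intro ε hε
        obtain ⟨p, hp⟩ := h1 (ε/2) (by positivity)
        obtain ⟨q, hq⟩ := h2 (ε/2) (by positivity)
        refine ⟨p + q, fun z hz => ?_⟩
        have key : (p+q).eval z - (F i z + ∑ j ∈ t, F j z)
            = (p.eval z - F i z) + (q.eval z - ∑ j ∈ t, F j z) := by simp; ring
        rw [key]
        calc ‖(p.eval z - F i z) + (q.eval z - ∑ j ∈ t, F j z)‖
            ≤ ‖p.eval z - F i z‖ + ‖q.eval z - ∑ j ∈ t, F j z‖ := norm_add_le _ _
          _ ≤ ε/2 + ε/2 := add_le_add (hp z hz) (hq z hz)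
          _ = ε := by ring
      intro ε hε
      obtain ⟨p, hp⟩ := h3 ε hε
      exact ⟨p, fun z hz => by simpa [Finset.sum_insert hni] using hp z hz⟩

lemma approxOn_limit {K : Set ℂ} {h : ℂ → ℂ}
    (H : ∀ ε : ℝ, 0 < ε → ∃ g : ℂ → ℂ, ApproxOn K g ∧ ∀ z ∈ K, ‖g z - h z‖ ≤ ε) :
    ApproxOn K h := fun ε hε => by
  obtain ⟨g, hg, hgh⟩ := H (ε/2) (by positivity)
  obtain ⟨p, hp⟩ := hg (ε/2) (by positivity)
  refine ⟨p, fun z hz => ?_⟩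
  calc ‖p.eval z - h z‖ = ‖(p.eval z - g z) + (g z - h z)‖ := by ring_nf
    _ ≤ ‖p.eval z - g z‖ + ‖g z - h z‖ := norm_add_le _ _
    _ ≤ ε/2 + ε/2 := add_le_add (hp z hz) (hgh z hz)
    _ = ε := by ring


-- distance bound: points of KS w δ stay ≥ δ/2 away from the ray [0,∞)·w
lemma ray_dist {w : ℂ} (hw : ‖w‖ = 1) {δ : ℝ} (hδ : 0 < δ) (hδ1 : δ ≤ 1)
    {z : ℂ} (hz : z ∈ KS w δ) {t : ℝ} (ht : 0 ≤ t) :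
    δ/2 ≤ ‖z - (t : ℂ) * w‖ := by
  obtain ⟨hz1, hzw⟩ := hz
  have h1 : Complex.normSq z = 1 := by
    rw [Complex.normSq_eq_norm_sq, hz1]; norm_num
  have h2 : Complex.normSq w = 1 := by
    rw [Complex.normSq_eq_norm_sq, hw]; norm_num
  set a : ℝ := (z * (starRingEnd ℂ) w).re with ha
  have hsub : Complex.normSq (z - w) = 2 - 2*a := by
    rw [Complex.normSq_sub, h1, h2]; ring
  have hδ2 : δ^2 ≤ 2 - 2*a := by
    rw [← hsub]
    have : ‖z - w‖^2 = Complex.normSq (z - w) := by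
      rw [Complex.sq_norm]
    rw [← this]
    exact pow_le_pow_left₀ (le_of_lt hδ) hzw 2
  have hsubt : Complex.normSq (z - (t:ℂ)*w) = 1 + t^2 - 2*t*a := by
    rw [Complex.normSq_sub, h1]
    have hcw : ((t:ℂ)*w * (starRingEnd ℂ) ((t:ℂ)*w)) = (t:ℂ)^2 * (w * (starRingEnd ℂ) w) := by
      simp [map_mul, Complex.conj_ofReal]; ring
    have h3 : Complex.normSq ((t:ℂ)*w) = t^2 := by
      rw [Complex.normSq_mul, h2, Complex.normSq_ofReal]; ring
    have h4 : (z * (starRingEnd ℂ) ((t:ℂ)*w)).re = t * a := by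
      rw [map_mul, Complex.conj_ofReal]
      have : z * ((t:ℂ) * (starRingEnd ℂ) w) = (t:ℂ) * (z * (starRingEnd ℂ) w) := by ring
      rw [this]
      simp [Complex.mul_re, Complex.ofReal_re, Complex.ofReal_im, ha]
    rw [h3, h4]; ring
  have hs1 : δ^2 ≤ 1 := by nlinarith
  have hta : 0 ≤ t*(2-2*a-δ^2) := mul_nonneg ht (by linarith)
  have h1δ : (0:ℝ) ≤ 1 - δ^2 := by linarith
  have key0 : 0 ≤ 4*(1-t)^2*(1-δ^2) + δ^2*((2*t-1)^2 + 2) :=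
    add_nonneg (mul_nonneg (by positivity) h1δ) (by positivity)
  have key : (δ/2)^2 ≤ 1 + t^2 - 2*t*a := by nlinarith [hta, key0, sq_nonneg (1-t)]
  have h5 : ‖z - (t:ℂ)*w‖ = Real.sqrt (1 + t^2 - 2*t*a) := by
    rw [Complex.norm_def, hsubt]
  rw [h5]
  have := Real.sqrt_le_sqrt (le_of_lt (lt_of_lt_of_le (by positivity : (0:ℝ) < (δ/2)^2) key))
  calc δ/2 = Real.sqrt ((δ/2)^2) := by rw [Real.sqrt_sq (by positivity)]
    _ ≤ Real.sqrt (1 + t^2 - 2*t*a) := Real.sqrt_le_sqrt key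


lemma geom_diff {u c : ℂ} {ρ : ℝ} (hρ : 0 < ρ) (hu : ρ ≤ ‖u‖) (hc : ‖c‖ ≤ ρ/2) (n : ℕ) :
    ∑ k ∈ Finset.range n, (-c)^k * (u⁻¹)^(k+1) - (u + c)⁻¹ = -((-c * u⁻¹)^n * (u + c)⁻¹) := by
  have hu0 : u ≠ 0 := by
    intro h; rw [h, norm_zero] at hu; linarith
  have huc : u + c ≠ 0 := by
    intro h
    have h1 : ‖u‖ - ‖c‖ ≤ ‖u + c‖ := by
      have := norm_sub_norm_le u (-c)
      simpa [sub_neg_eq_add] using this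
    rw [h, norm_zero] at h1
    linarith
  set r : ℂ := -c * u⁻¹ with hr
  have hrn : ‖r‖ ≤ 1/2 := by
    rw [hr, norm_mul, norm_neg, norm_inv]
    calc ‖c‖ * ‖u‖⁻¹ ≤ (ρ/2) * ρ⁻¹ := by
          apply mul_le_mul hc _ (by positivity) (by positivity)
          exact inv_anti₀ hρ hu
      _ = 1/2 := by field_simp
  have hr1 : r ≠ 1 := by
    intro h
    rw [h] at hrn; norm_num at hrn
  have hterm : ∀ k, (-c)^k * (u⁻¹)^(k+1) = u⁻¹ * r^k := fun k => by
    rw [hr, mul_pow]; ring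
  have hrn_eq : ∀ n : ℕ, (-c)^n * (u⁻¹)^n = r^n := fun n => by rw [hr, mul_pow]
  have h2 : (1:ℂ) - r = (u+c) * u⁻¹ := by
    rw [hr]; field_simp; ring
  have h3 : (1 - r) * (u+c)⁻¹ = u⁻¹ := by
    rw [h2, mul_comm (u+c) u⁻¹, mul_assoc, mul_inv_cancel₀ huc, mul_one]
  induction n with
  | zero => simp
  | succ n ih =>
      rw [Finset.sum_range_succ]
      have h4 : (-c)^n * (u⁻¹)^(n+1) = r^n * u⁻¹ := by
        rw [pow_succ, ← mul_assoc, hrn_eq]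
      have h5 : ∑ k ∈ Finset.range n, (-c)^k * (u⁻¹)^(k+1) + (-c)^n * (u⁻¹)^(n+1) - (u + c)⁻¹
          = -(r^n * (u + c)⁻¹) + r^n * u⁻¹ := by
        rw [← h4]; linear_combination ih
      rw [h5, pow_succ]
      linear_combination (-(r^n)) * h3

lemma approx_inv_shift {Ks : Set ℂ} {φ : ℂ → ℂ} (c : ℂ) (ρ : ℝ) (hρ : 0 < ρ)
    (hφ : ∀ z ∈ Ks, ρ ≤ ‖φ z‖) (hc : ‖c‖ ≤ ρ/2)
    (happ : ApproxOn Ks (fun z => (φ z)⁻¹)) :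
    ApproxOn Ks (fun z => (φ z + c)⁻¹) := by
  apply approxOn_limit
  intro ε hε
  obtain ⟨n, hn⟩ := exists_pow_lt_of_lt_one (show (0:ℝ) < ε * (ρ/2) from by positivity)
    (by norm_num : (1:ℝ)/2 < 1)
  refine ⟨fun z => ∑ k ∈ Finset.range n, (-c)^k * ((φ z)⁻¹)^(k+1), ?_, ?_⟩
  · apply approxOn_sum
    intro k _
    have hb : ∀ z ∈ Ks, ‖(φ z)⁻¹‖ ≤ ρ⁻¹ := fun z hz => by
      rw [norm_inv]; exact inv_anti₀ hρ (hφ z hz)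
    exact approxOn_smul _ (approxOn_pow (by positivity) happ hb (k+1))
  · intro z hz
    have hu := hφ z hz
    have key := geom_diff hρ hu hc n
    rw [key]
    have huc : ρ/2 ≤ ‖φ z + c‖ := by
      have h1 : ‖φ z‖ - ‖c‖ ≤ ‖φ z + c‖ := by
        have := norm_sub_norm_le (φ z) (-c)
        simpa [sub_neg_eq_add] using this
      linarith
    have hrn : ‖-c * (φ z)⁻¹‖ ≤ 1/2 := by
      rw [norm_mul, norm_neg, norm_inv]
      calc ‖c‖ * ‖φ z‖⁻¹ ≤ (ρ/2) * ρ⁻¹ := by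
            apply mul_le_mul hc (inv_anti₀ hρ hu) (by positivity) (by positivity)
        _ = 1/2 := by field_simp
    rw [norm_neg, norm_mul, norm_pow, norm_inv]
    calc ‖-c * (φ z)⁻¹‖^n * ‖φ z + c‖⁻¹ ≤ (1/2)^n * (ρ/2)⁻¹ := by
          apply mul_le_mul (pow_le_pow_left₀ (norm_nonneg _) hrn n)
            (inv_anti₀ (by positivity) huc) (by positivity) (by positivity)
      _ ≤ ε := by
          rw [div_pow, one_pow]
          have h2 : (1:ℝ)/2^n < ε * (ρ/2) := by
            calc (1:ℝ)/2^n = (1/2)^n := by rw [div_pow, one_pow]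
              _ < ε * (ρ/2) := hn
          calc (1:ℝ)/2^n * (ρ/2)⁻¹ ≤ (ε * (ρ/2)) * (ρ/2)⁻¹ := by
                apply mul_le_mul_of_nonneg_right (le_of_lt h2) (by positivity)
            _ = ε := by field_simp

lemma approx_inv_base {Ks : Set ℂ} (b : ℂ) (hb : 3 ≤ ‖b‖) (hK : ∀ z ∈ Ks, ‖z‖ = 1) :
    ApproxOn Ks (fun z => (z - b)⁻¹) := by
  have hb0 : b ≠ 0 := by intro h; rw [h, norm_zero] at hb; linarith
  apply approxOn_limit
  intro ε hε
  obtain ⟨n, hn⟩ := exists_pow_lt_of_lt_one (show (0:ℝ) < ε * 2 from by positivity)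
    (by norm_num : (1:ℝ)/3 < 1)
  refine ⟨fun z => ∑ k ∈ Finset.range n, (-z)^k * (((-b):ℂ)⁻¹)^(k+1), ?_, ?_⟩
  · apply approxOn_sum
    intro k _
    have h1 : ApproxOn Ks (fun z => (-z)^k) := by
      have := approxOn_poly (K := Ks) ((-Polynomial.X)^k)
      exact approxOn_congr (fun z _ => by simp) this
    have := approxOn_smul ((((-b):ℂ)⁻¹)^(k+1)) h1
    exact approxOn_congr (fun z _ => by ring) this
  · intro z hz
    have hz1 := hK z hz
    -- use geom_diff with u := -b, c := z, ρ := 2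
    have h1 : (2:ℝ) ≤ ‖(-b : ℂ)‖ := by rw [norm_neg]; linarith
    have h2 : ‖z‖ ≤ 2/2 := by rw [hz1]; norm_num
    have key := geom_diff (show (0:ℝ) < 2 by norm_num) h1 h2 n
    have h3 : (-b : ℂ) + z = z - b := by ring
    rw [h3] at key
    rw [key, norm_neg, norm_mul, norm_pow]
    have hzb : 2 ≤ ‖z - b‖ := by
      have := norm_sub_norm_le b z
      have h4 : ‖z - b‖ = ‖b - z‖ := by rw [← norm_neg]; congr 1; ring
      rw [h4]; rw [hz1] at this; linarith
    have hr3 : ‖-z * (-b : ℂ)⁻¹‖ ≤ 1/3 := by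
      rw [norm_mul, norm_neg, hz1, one_mul, norm_inv, norm_neg]
      rw [inv_le_comm₀ (by linarith) (by norm_num)]
      linarith
    calc ‖-z * (-b:ℂ)⁻¹‖^n * ‖(z - b)⁻¹‖ ≤ (1/3)^n * (1/2) := by
          apply mul_le_mul (pow_le_pow_left₀ (norm_nonneg _) hr3 n) _ (norm_nonneg _) (by positivity)
          rw [norm_inv]
          rw [inv_le_comm₀ (by linarith) (by norm_num)]
          linarith
      _ ≤ ε := by
          have h5 : ((1:ℝ)/3)^n < ε * 2 := hn
          nlinarith [pow_nonneg (show (0:ℝ) ≤ 1/3 by norm_num) n]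

lemma approx_inv_circle (w : ℂ) (hw : ‖w‖ = 1) (δ : ℝ) (hδ : 0 < δ) :
    ApproxOn (KS w δ) (fun z => z⁻¹) := by
  have hmono : KS w δ ⊆ KS w (min δ 1) := fun z hz => ⟨hz.1, le_trans (min_le_left _ _) hz.2⟩
  apply approxOn_mono hmono
  set δ' : ℝ := min δ 1 with hδ'
  have hδ'0 : 0 < δ' := lt_min hδ one_pos
  have hδ'1 : δ' ≤ 1 := min_le_right _ _
  -- Q t : approximability of (z - t w)⁻¹
  set Q : ℝ → Prop := fun t => ApproxOn (KS w δ') (fun z => (z - (t:ℂ)*w)⁻¹) with hQ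
  have hbase : Q 3 := by
    rw [hQ]
    have hb : (3:ℝ) ≤ ‖((3:ℝ):ℂ)*w‖ := by
      rw [norm_mul, hw, mul_one]; norm_num
    exact approx_inv_base _ hb (fun z hz => hz.1)
  have hstep : ∀ s t : ℝ, 0 ≤ s → 0 ≤ t → |s - t| ≤ δ'/4 → Q t → Q s := by
    intro s t hs ht hst hQt
    rw [hQ]
    have key := approx_inv_shift (Ks := KS w δ') (φ := fun z => z - (t:ℂ)*w)
      (((t:ℂ) - (s:ℂ))*w) (δ'/2) (by positivity)
      (fun z hz => ray_dist hw hδ'0 hδ'1 hz ht)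
      (by
        rw [norm_mul, hw, mul_one]
        have : ((t:ℂ) - (s:ℂ)) = ((t - s : ℝ) : ℂ) := by push_cast; ring
        rw [this, Complex.norm_real]
        rw [Real.norm_eq_abs, abs_sub_comm]
        calc |s - t| ≤ δ'/4 := hst
          _ ≤ δ'/2/2 := by linarith)
      hQt
    exact approxOn_congr (fun z _ => by push_cast; ring_nf) key
  have hdesc : ∀ n : ℕ, Q (max (3 - n*(δ'/8)) 0) := by
    intro n
    induction n with
    | zero => simpa using hbase
    | succ n ih =>
        apply hstep _ _ (le_max_right _ _) (le_max_right _ _) _ ih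
        have habs : |max (3 - ((n:ℝ)+1)*(δ'/8)) 0 - max (3 - (n:ℝ)*(δ'/8)) 0|
            ≤ |(3 - ((n:ℝ)+1)*(δ'/8)) - (3 - (n:ℝ)*(δ'/8))| := abs_max_sub_max_le_abs _ _ _
        have h8 : |(3 - ((n:ℝ)+1)*(δ'/8)) - (3 - (n:ℝ)*(δ'/8))| = δ'/8 := by
          rw [show (3 - ((n:ℝ)+1)*(δ'/8)) - (3 - (n:ℝ)*(δ'/8)) = -(δ'/8) by ring, abs_neg]
          exact _root_.abs_of_nonneg (by positivity)
        push_cast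
        linarith
  obtain ⟨m, hm⟩ := exists_nat_ge (24/δ')
  have hm0 : 3 - m*(δ'/8) ≤ 0 := by
    have : 24/δ' * (δ'/8) ≤ m * (δ'/8) := by
      apply mul_le_mul_of_nonneg_right hm (by positivity)
    have h24 : 24/δ' * (δ'/8) = 3 := by field_simp; ring
    linarith
  have hQ0 : Q 0 := by
    have := hdesc m
    rwa [max_eq_right hm0] at this
  rw [hQ] at hQ0
  exact approxOn_congr (fun z _ => by push_cast; simp) hQ0


/-- bounded on the circle and approximable on every circle-minus-arc -/
def GB (g : ℂ → ℂ) : Prop :=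
  (∃ C : ℝ, 0 ≤ C ∧ ∀ z : ℂ, ‖z‖ = 1 → ‖g z‖ ≤ C) ∧
  ∀ w : ℂ, ‖w‖ = 1 → ∀ δ : ℝ, 0 < δ → ApproxOn (KS w δ) g

lemma gb_const (c : ℂ) : GB (fun _ => c) :=
  ⟨⟨‖c‖, norm_nonneg c, fun _ _ => le_refl _⟩,
   fun _ _ _ _ => approxOn_congr (fun z _ => by simp) (approxOn_poly (Polynomial.C c))⟩

lemma gb_id : GB (fun z => z) :=
  ⟨⟨1, zero_le_one, fun z hz => le_of_eq hz⟩,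
   fun _ _ _ _ => approxOn_congr (fun z _ => by simp) (approxOn_poly Polynomial.X)⟩

lemma gb_add {g h : ℂ → ℂ} (hg : GB g) (hh : GB h) : GB (fun z => g z + h z) := by
  obtain ⟨⟨Cg, hCg0, hCg⟩, hag⟩ := hg
  obtain ⟨⟨Ch, hCh0, hCh⟩, hah⟩ := hh
  refine ⟨⟨Cg + Ch, by linarith, fun z hz => ?_⟩, fun w hw δ hδ => approxOn_add (hag w hw δ hδ) (hah w hw δ hδ)⟩
  calc ‖g z + h z‖ ≤ ‖g z‖ + ‖h z‖ := norm_add_le _ _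
    _ ≤ Cg + Ch := add_le_add (hCg z hz) (hCh z hz)

lemma gb_mul {g h : ℂ → ℂ} (hg : GB g) (hh : GB h) : GB (fun z => g z * h z) := by
  obtain ⟨⟨Cg, hCg0, hCg⟩, hag⟩ := hg
  obtain ⟨⟨Ch, hCh0, hCh⟩, hah⟩ := hh
  refine ⟨⟨Cg * Ch, by positivity, fun z hz => ?_⟩, fun w hw δ hδ =>
    approxOn_mul (hag w hw δ hδ) (hah w hw δ hδ)
      (fun z hz => hCg z hz.1) (fun z hz => hCh z hz.1)⟩
  rw [norm_mul]
  exact mul_le_mul (hCg z hz) (hCh z hz) (norm_nonneg _) hCg0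

lemma gb_inv : GB (fun z => z⁻¹) := by
  refine ⟨⟨1, zero_le_one, fun z hz => ?_⟩, fun w hw δ hδ => approx_inv_circle w hw δ hδ⟩
  rw [norm_inv, hz]; norm_num

lemma norm_one_conj_eq_inv {z : ℂ} (hz : ‖z‖ = 1) : (starRingEnd ℂ) z = z⁻¹ := by
  have hz0 : z ≠ 0 := by intro h; rw [h, norm_zero] at hz; norm_num at hz
  field_simp
  rw [mul_comm, Complex.mul_conj]
  norm_cast
  rw [Complex.normSq_eq_norm_sq, hz]; norm_num

lemma gb_conj : GB (fun z => (starRingEnd ℂ) z) := by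
  obtain ⟨⟨C, hC0, hC⟩, ha⟩ := gb_inv
  refine ⟨⟨1, zero_le_one, fun z hz => by rw [RCLike.norm_conj]; exact le_of_eq hz⟩,
    fun w hw δ hδ => approxOn_congr (fun z hz => (norm_one_conj_eq_inv hz.1).symm) (ha w hw δ hδ)⟩

/-- the countable family: rational polynomials in z, z̄, i -/
def vv (z : ℂ) : Fin 3 → ℂ := ![z, (starRingEnd ℂ) z, Complex.I]

def fam (P : MvPolynomial (Fin 3) ℚ) (z : ℂ) : ℂ := MvPolynomial.aeval (vv z) P

lemma fam_add (P Q : MvPolynomial (Fin 3) ℚ) (z : ℂ) :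
    fam (P + Q) z = fam P z + fam Q z := by simp [fam]

lemma fam_mul (P Q : MvPolynomial (Fin 3) ℚ) (z : ℂ) :
    fam (P * Q) z = fam P z * fam Q z := by simp [fam]

lemma fam_C (q : ℚ) (z : ℂ) : fam (MvPolynomial.C q) z = (q : ℂ) := by
  simp [fam]

lemma fam_X (i : Fin 3) (z : ℂ) : fam (MvPolynomial.X i) z = vv z i := by
  simp [fam]

lemma gb_vv (i : Fin 3) : GB (fun z => vv z i) := by
  fin_cases i
  · exact gb_id
  · exact gb_conj
  · exact gb_const Complex.I

lemma gb_fam (P : MvPolynomial (Fin 3) ℚ) : GB (fam P) := by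
  induction P using MvPolynomial.induction_on with
  | C a =>
      have h : fam (MvPolynomial.C a) = fun _ => (a:ℂ) := funext (fam_C a)
      rw [h]; exact gb_const _
  | add p q hp hq =>
      have := gb_add hp hq
      exact (funext (fam_add p q) : fam (p+q) = _) ▸ this
  | mul_X p n hp =>
      have := gb_mul hp (gb_vv n)
      have h2 : fam (p * MvPolynomial.X n) = fun z => fam p z * vv z n := by
        funext z; rw [fam_mul, fam_X]
      exact h2 ▸ this

lemma star_fam (P : MvPolynomial (Fin 3) ℚ) :
    ∃ P' : MvPolynomial (Fin 3) ℚ, ∀ z : ℂ, (starRingEnd ℂ) (fam P z) = fam P' z := by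
  induction P using MvPolynomial.induction_on with
  | C a => exact ⟨MvPolynomial.C a, fun z => by simp only [fam_C]; exact map_ratCast _ a⟩
  | add p q hp hq =>
      obtain ⟨p', hp'⟩ := hp
      obtain ⟨q', hq'⟩ := hq
      exact ⟨p' + q', fun z => by rw [fam_add, map_add, hp' z, hq' z, fam_add]⟩
  | mul_X p n hp =>
      obtain ⟨p', hp'⟩ := hp
      have : ∃ Q : MvPolynomial (Fin 3) ℚ, ∀ z : ℂ, (starRingEnd ℂ) (vv z n) = fam Q z := by
        fin_cases n
        · exact ⟨MvPolynomial.X 1, fun z => by simp [vv, fam]⟩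
        · exact ⟨MvPolynomial.X 0, fun z => by simp [vv, fam]⟩
        · exact ⟨-MvPolynomial.X 2, fun z => by simp [vv, fam]⟩
      obtain ⟨Q, hQ⟩ := this
      exact ⟨p' * Q, fun z => by rw [fam_mul, map_mul, fam_X, hp' z, hQ z, fam_mul]⟩


abbrev S1 : Type := Metric.sphere (0 : ℂ) 1

def ι : C(S1, ℂ) := ⟨fun z => (z : ℂ), continuous_subtype_val⟩

def AA : StarSubalgebra ℂ C(S1, ℂ) := StarAlgebra.adjoin ℂ ({ι} : Set C(S1, ℂ))

lemma AA_sep : AA.SeparatesPoints := by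
  intro x y hxy
  refine ⟨ι, ⟨ι, StarAlgebra.subset_adjoin ℂ _ (Set.mem_singleton ι), rfl⟩, ?_⟩
  simpa [ι] using fun h => hxy (Subtype.coe_injective h)

lemma AA_dense : AA.topologicalClosure = ⊤ :=
  ContinuousMap.starSubalgebra_topologicalClosure_eq_top_of_separatesPoints AA AA_sep

lemma approx_in_AA (f : C(S1, ℂ)) (hf : f ∈ AA) :
    ∀ ε : ℝ, 0 < ε → ∃ P : MvPolynomial (Fin 3) ℚ, ∀ z : S1, ‖f z - fam P (z : ℂ)‖ ≤ ε := by
  induction hf using StarAlgebra.adjoin_induction with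
  | mem x hx =>
      intro ε hε
      rw [Set.mem_singleton_iff] at hx
      refine ⟨MvPolynomial.X 0, fun z => ?_⟩
      rw [hx]
      simp [ι, fam_X, vv, le_of_lt hε]
  | algebraMap c =>
      intro ε hε
      obtain ⟨q1, hq1⟩ := exists_rat_near c.re (show 0 < ε/2 by positivity)
      obtain ⟨q2, hq2⟩ := exists_rat_near c.im (show 0 < ε/2 by positivity)
      refine ⟨MvPolynomial.C q1 + MvPolynomial.C q2 * MvPolynomial.X 2, fun z => ?_⟩
      rw [fam_add, fam_mul, fam_C, fam_C, fam_X]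
      have h1 : (algebraMap ℂ C(S1, ℂ)) c z = c := rfl
      rw [h1]
      have h2 : vv (z:ℂ) 2 = Complex.I := rfl
      rw [h2]
      have key : c - ((q1:ℂ) + (q2:ℂ) * Complex.I)
          = ((c.re - q1 : ℝ) : ℂ) + ((c.im - q2 : ℝ) : ℂ) * Complex.I := by
        apply Complex.ext <;> simp
      rw [key]
      calc ‖((c.re - q1 : ℝ) : ℂ) + ((c.im - q2 : ℝ) : ℂ) * Complex.I‖
          ≤ ‖((c.re - q1 : ℝ) : ℂ)‖ + ‖((c.im - q2 : ℝ) : ℂ) * Complex.I‖ := norm_add_le _ _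
        _ = |c.re - q1| + |c.im - q2| := by
            rw [norm_mul, Complex.norm_I, mul_one, Complex.norm_real, Complex.norm_real,
              Real.norm_eq_abs, Real.norm_eq_abs]
        _ ≤ ε/2 + ε/2 := add_le_add (le_of_lt hq1) (le_of_lt hq2)
        _ = ε := by ring
  | add f g hfA hgA hf hg =>
      intro ε hε
      obtain ⟨P, hP⟩ := hf (ε/2) (by positivity)
      obtain ⟨Q, hQ⟩ := hg (ε/2) (by positivity)
      refine ⟨P + Q, fun z => ?_⟩
      rw [fam_add]
      have h1 : (f + g) z = f z + g z := rfl
      rw [h1]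
      calc ‖f z + g z - (fam P (z:ℂ) + fam Q (z:ℂ))‖
          = ‖(f z - fam P (z:ℂ)) + (g z - fam Q (z:ℂ))‖ := by ring_nf
        _ ≤ ‖f z - fam P (z:ℂ)‖ + ‖g z - fam Q (z:ℂ)‖ := norm_add_le _ _
        _ ≤ ε/2 + ε/2 := add_le_add (hP z) (hQ z)
        _ = ε := by ring
  | mul f g hfA hgA hf hg =>
      intro ε hε
      set η : ℝ := min 1 (ε / (‖f‖ + ‖g‖ + 2)) with hη
      have hη0 : 0 < η := lt_min one_pos (by positivity)
      obtain ⟨P, hP⟩ := hf η hη0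
      obtain ⟨Q, hQ⟩ := hg η hη0
      refine ⟨P * Q, fun z => ?_⟩
      rw [fam_mul]
      have h1 : (f * g) z = f z * g z := rfl
      rw [h1]
      have key : f z * g z - fam P (z:ℂ) * fam Q (z:ℂ)
          = f z * (g z - fam Q (z:ℂ)) + (f z - fam P (z:ℂ)) * fam Q (z:ℂ) := by ring
      rw [key]
      have hfz : ‖f z‖ ≤ ‖f‖ := ContinuousMap.norm_coe_le_norm f z
      have hgz : ‖g z‖ ≤ ‖g‖ := ContinuousMap.norm_coe_le_norm g z
      have hQz : ‖fam Q (z:ℂ)‖ ≤ ‖g‖ + 1 := by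
        have := norm_sub_norm_le (fam Q (z:ℂ)) (g z)
        have h2 : ‖fam Q (z:ℂ) - g z‖ = ‖g z - fam Q (z:ℂ)‖ := norm_sub_rev _ _
        have h3 := hQ z
        have h4 : η ≤ 1 := min_le_left _ _
        linarith
      calc ‖f z * (g z - fam Q (z:ℂ)) + (f z - fam P (z:ℂ)) * fam Q (z:ℂ)‖
          ≤ ‖f z‖ * ‖g z - fam Q (z:ℂ)‖ + ‖f z - fam P (z:ℂ)‖ * ‖fam Q (z:ℂ)‖ := by
            refine le_trans (norm_add_le _ _) ?_
            rw [norm_mul, norm_mul]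
        _ ≤ ‖f‖ * η + η * (‖g‖ + 1) := by
            apply add_le_add
            · exact mul_le_mul hfz (hQ z) (norm_nonneg _) (norm_nonneg _)
            · exact mul_le_mul (hP z) hQz (norm_nonneg _) (le_of_lt hη0)
        _ = (‖f‖ + ‖g‖ + 1) * η := by ring
        _ ≤ (‖f‖ + ‖g‖ + 2) * (ε / (‖f‖ + ‖g‖ + 2)) := by
            apply mul_le_mul (by linarith [norm_nonneg f, norm_nonneg g])
              (min_le_right _ _) (le_of_lt hη0) (by positivity)
        _ = ε := by field_simp
  | star f hfA hf =>
      intro ε hε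
      obtain ⟨P, hP⟩ := hf ε hε
      obtain ⟨P', hP'⟩ := star_fam P
      refine ⟨P', fun z => ?_⟩
      have h1 : (star f) z = (starRingEnd ℂ) (f z) := rfl
      rw [h1, ← hP' (z:ℂ), ← map_sub]
      rw [RCLike.norm_conj]
      exact hP z

lemma dense_fam (f : C(S1, ℂ)) :
    ∀ ε : ℝ, 0 < ε → ∃ P : MvPolynomial (Fin 3) ℚ, ∀ z : S1, ‖f z - fam P (z : ℂ)‖ ≤ ε := by
  intro ε hε
  have hf : f ∈ AA.topologicalClosure := by rw [AA_dense]; trivial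
  have hf2 : f ∈ closure (AA : Set C(S1, ℂ)) := hf
  rw [Metric.mem_closure_iff] at hf2
  obtain ⟨g, hgA, hgd⟩ := hf2 (ε/2) (by positivity)
  obtain ⟨P, hP⟩ := approx_in_AA g hgA (ε/2) (by positivity)
  refine ⟨P, fun z => ?_⟩
  calc ‖f z - fam P (z:ℂ)‖ = ‖(f z - g z) + (g z - fam P (z:ℂ))‖ := by ring_nf
    _ ≤ ‖f z - g z‖ + ‖g z - fam P (z:ℂ)‖ := norm_add_le _ _
    _ ≤ ε/2 + ε/2 := by
        apply add_le_add _ (hP z)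
        calc ‖f z - g z‖ = dist (f z) (g z) := (dist_eq_norm _ _).symm
          _ ≤ dist f g := ContinuousMap.dist_apply_le_dist z
          _ ≤ ε/2 := le_of_lt hgd
    _ = ε := by ring


instance : Countable (MvPolynomial (Fin 3) ℚ) := by
  unfold MvPolynomial
  exact AddMonoidAlgebra.coeff_injective.countable

def wc (m : ℕ) : ℂ := Complex.exp (((1/((m:ℝ)+1) : ℝ) : ℂ) * Complex.I)

def δm (m : ℕ) : ℝ := 1/((m:ℝ)+2)^2

lemma δm_pos (m : ℕ) : 0 < δm m := by unfold δm; positivity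

lemma wc_norm (m : ℕ) : ‖wc m‖ = 1 := by
  unfold wc
  rw [Complex.norm_exp]
  simp

lemma circle_event {ζ : ℂ} (hζ : ‖ζ‖ = 1) : ∀ᶠ m in atTop, ζ ∈ KS (wc m) (δm m) := by
  by_cases h1 : ζ = 1
  · -- ζ = 1 : always in KS
    apply Filter.Eventually.of_forall
    intro m
    refine ⟨hζ, ?_⟩
    set θ : ℝ := 1/((m:ℝ)+1) with hθ
    have hθ0 : 0 < θ := by positivity
    have hθ1 : θ ≤ 1 := by
      rw [hθ, div_le_one (by positivity)]
      have : (0:ℝ) ≤ (m:ℝ) := Nat.cast_nonneg m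
      linarith
    have him : (ζ - wc m).im = -Real.sin θ := by
      rw [h1]
      unfold wc
      rw [Complex.sub_im, Complex.one_im]
      rw [Complex.exp_ofReal_mul_I_im]
      ring
    have habs : |(-Real.sin θ)| ≤ ‖ζ - wc m‖ := by
      rw [← him]
      exact Complex.abs_im_le_norm _
    have hsin : Real.sin θ > θ - θ^3/4 := by have := Real.sin_gt_sub_cube hθ0; nlinarith [pow_pos hθ0 3]
    have hsin2 : Real.sin θ ≥ (3/4)*θ := by nlinarith [sq_nonneg θ, hθ0.le, hθ1]
    have hsin0 : 0 ≤ Real.sin θ := by nlinarith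
    rw [abs_neg, _root_.abs_of_nonneg hsin0] at habs
    have hm0 : (0:ℝ) ≤ (m:ℝ) := Nat.cast_nonneg m
    have hfin : δm m ≤ (3/4)*θ := by
      have ha : 1/((m:ℝ)+2)^2 ≤ 3/(4*((m:ℝ)+1)) := by
        rw [div_le_div_iff₀ (by positivity) (by positivity)]
        nlinarith
      have hb : (3:ℝ)/(4*((m:ℝ)+1)) = 3/4 * (1/((m:ℝ)+1)) := by field_simp
      unfold δm
      rw [hθ]
      linarith
    linarith
  · -- ζ ≠ 1 : w m → 1 and δm → 0
    have hw1 : Tendsto wc atTop (nhds 1) := by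
      have h2 : Tendsto (fun m : ℕ => (1/((m:ℝ)+1) : ℝ)) atTop (nhds 0) :=
        tendsto_one_div_add_atTop_nhds_zero_nat
      have h3 : Tendsto (fun m : ℕ => ((1/((m:ℝ)+1) : ℝ) : ℂ) * Complex.I) atTop (nhds 0) := by
        have h4 := (Complex.continuous_ofReal.tendsto 0).comp h2
        have h5 := h4.mul_const Complex.I
        convert h5 using 2
        all_goals simp
      have h6 := (Complex.continuous_exp.tendsto 0).comp h3
      have h7 : Tendsto wc atTop (nhds (Complex.exp 0)) := h6
      rwa [Complex.exp_zero] at h7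
    have hdist : Tendsto (fun m => ‖ζ - wc m‖) atTop (nhds ‖ζ - 1‖) := by
      have hc : Continuous (fun x : ℂ => ‖ζ - x‖) :=
        (continuous_const.sub continuous_id).norm
      have := (hc.tendsto 1).comp hw1
      exact this
    have hδ0 : Tendsto δm atTop (nhds 0) := by
      apply squeeze_zero (fun m => le_of_lt (δm_pos m)) (g := fun m : ℕ => 1/((m:ℝ)+1))
      · intro m
        unfold δm
        rw [div_le_div_iff₀ (by positivity) (by positivity)]
        have : (0:ℝ) ≤ (m:ℝ) := Nat.cast_nonneg m
        nlinarith
      · exact tendsto_one_div_add_atTop_nhds_zero_nat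
    have hpos : 0 < ‖ζ - 1‖ := by
      rw [norm_pos_iff]
      exact sub_ne_zero.mpr h1
    filter_upwards [hδ0.eventually_lt hdist hpos] with m hm
    exact ⟨hζ, le_of_lt hm⟩


lemma gb_neg {g : ℂ → ℂ} (hg : GB g) : GB (fun z => -(g z)) := by
  have h1 := gb_mul (gb_const (-1)) hg
  have h2 : (fun z => (-1 : ℂ) * g z) = fun z => -(g z) := by funext z; ring
  rwa [h2] at h1

lemma gb_sub {g h : ℂ → ℂ} (hg : GB g) (hh : GB h) : GB (fun z => g z - h z) := by
  have h1 := gb_add hg (gb_neg hh)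
  have h2 : (fun z => g z + -(h z)) = fun z => g z - h z := by funext z; ring
  rwa [h2] at h1

lemma gb_pow {g : ℂ → ℂ} (hg : GB g) (k : ℕ) : GB (fun z => (g z)^k) := by
  induction k with
  | zero => simpa using gb_const 1
  | succ k ih =>
      have h1 := gb_mul ih hg
      have h2 : (fun z => (g z)^k * g z) = fun z => (g z)^(k+1) := by
        funext z; rw [pow_succ]
      rwa [h2] at h1

lemma gb_polyeval (s : Polynomial ℂ) : GB (fun z => s.eval z) := by
  constructor
  · refine ⟨∑ k ∈ Finset.range (s.natDegree + 1), ‖s.coeff k‖,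
      Finset.sum_nonneg (fun k _ => norm_nonneg _), fun z hz => ?_⟩
    show ‖s.eval z‖ ≤ _
    rw [Polynomial.eval_eq_sum_range]
    calc ‖∑ i ∈ Finset.range (s.natDegree + 1), s.coeff i * z^i‖
        ≤ ∑ i ∈ Finset.range (s.natDegree + 1), ‖s.coeff i * z^i‖ := norm_sum_le _ _
      _ = ∑ i ∈ Finset.range (s.natDegree + 1), ‖s.coeff i‖ := by
          apply Finset.sum_congr rfl
          intro i _
          rw [norm_mul, norm_pow, hz, one_pow, mul_one]
  · exact fun w hw δ hδ => approxOn_poly s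

def enum : ℕ → MvPolynomial (Fin 3) ℚ :=
  (exists_surjective_nat (MvPolynomial (Fin 3) ℚ)).choose

lemma enum_surj : Function.Surjective enum :=
  (exists_surjective_nat (MvPolynomial (Fin 3) ℚ)).choose_spec

def tgt (m : ℕ) : ℂ → ℂ := fam (enum (Nat.unpair m).1)

lemma gb_tgt (m : ℕ) : GB (tgt m) := gb_fam _

lemma stage (m : ℕ) (s : Polynomial ℂ) :
    ∃ p : Polynomial ℂ, ∀ z ∈ KS (wc m) (δm m),
      ‖(s + Polynomial.X^(s.natDegree + m + 1) * p).eval z - tgt m z‖ ≤ 1/((m:ℝ)+1) := by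
  set d := s.natDegree + m + 1 with hd
  have hGB : GB (fun z => (tgt m z - s.eval z) * (z⁻¹)^d) :=
    gb_mul (gb_sub (gb_tgt m) (gb_polyeval s)) (gb_pow gb_inv d)
  obtain ⟨p, hp⟩ := hGB.2 (wc m) (wc_norm m) (δm m) (δm_pos m) (1/((m:ℝ)+1)) (by positivity)
  refine ⟨p, fun z hz => ?_⟩
  have hz1 : ‖z‖ = 1 := hz.1
  have hz0 : z ≠ 0 := by intro h; rw [h, norm_zero] at hz1; norm_num at hz1
  have hzz : z^d * (z⁻¹)^d = 1 := by rw [← mul_pow, mul_inv_cancel₀ hz0, one_pow]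
  have key : (s + Polynomial.X^d * p).eval z - tgt m z
      = z^d * (p.eval z - (tgt m z - s.eval z) * (z⁻¹)^d) := by
    simp only [Polynomial.eval_add, Polynomial.eval_mul, Polynomial.eval_pow, Polynomial.eval_X]
    linear_combination (tgt m z - Polynomial.eval z s) * hzz
  rw [key, norm_mul, norm_pow, hz1, one_pow, one_mul]
  exact hp z hz

def step (m : ℕ) (s : Polynomial ℂ) : Polynomial ℂ :=
  s + Polynomial.X^(s.natDegree + m + 1) * (stage m s).choose

def PP : ℕ → Polynomial ℂ
  | 0 => 0
  | m+1 => step m (PP m)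

lemma PP_spec (m : ℕ) : ∀ z ∈ KS (wc m) (δm m),
    ‖(PP (m+1)).eval z - tgt m z‖ ≤ 1/((m:ℝ)+1) :=
  (stage m (PP m)).choose_spec

lemma PP_coeff_lt (m : ℕ) {j : ℕ} (hj : j < (PP m).natDegree + m + 1) :
    (PP (m+1)).coeff j = (PP m).coeff j := by
  show (step m (PP m)).coeff j = _
  unfold step
  rw [Polynomial.coeff_add, mul_comm (Polynomial.X^((PP m).natDegree + m + 1)),
    Polynomial.coeff_mul_X_pow', if_neg (by omega)]
  ring

lemma PP_deg_mono (m : ℕ) : (PP m).natDegree ≤ (PP (m+1)).natDegree := by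
  by_cases h : PP m = 0
  · rw [h, Polynomial.natDegree_zero]; exact Nat.zero_le _
  · apply Polynomial.le_natDegree_of_ne_zero
    rw [PP_coeff_lt m (by omega)]
    exact Polynomial.leadingCoeff_ne_zero.mpr h

lemma PP_deg_mono' {m M : ℕ} (h : m ≤ M) : (PP m).natDegree ≤ (PP M).natDegree := by
  induction M, h using Nat.le_induction with
  | base => exact le_refl _
  | succ M hM ih => exact le_trans ih (PP_deg_mono M)

lemma PP_stab {m' M : ℕ} (h : m' ≤ M) {j : ℕ} (hj : j < (PP m').natDegree + m' + 1) :
    (PP M).coeff j = (PP m').coeff j := by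
  induction M, h using Nat.le_induction with
  | base => rfl
  | succ M hM ih =>
      rw [PP_coeff_lt M ?_, ih]
      have h1 := PP_deg_mono' hM
      omega

def aa : ℕ → ℂ := fun j => (PP (j+1)).coeff j

lemma aa_eq {j M : ℕ} (hj : j < M) : (PP M).coeff j = aa j := by
  have h1 : (PP M).coeff j = (PP (j+1)).coeff j := PP_stab hj (by omega)
  rw [h1]; rfl

def nm (m : ℕ) : ℕ := (PP (m+1)).natDegree + m + 1

lemma nm_lt (m : ℕ) : nm m < nm (m+1) := by
  unfold nm
  have := PP_deg_mono (m+1)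
  omega

lemma nm_pos (m : ℕ) : 0 < nm m := by unfold nm; omega

lemma sum_eq (m : ℕ) (z : ℂ) :
    ∑ j ∈ Finset.range (nm m + 1), aa j * z^j = (PP (m+1)).eval z := by
  have hcoeff : ∀ j, j < nm m + 1 → aa j = (PP (m+1)).coeff j := by
    intro j hj
    by_cases h : j < m+1
    · exact (aa_eq h).symm
    · have h1 : (PP (j+1)).coeff j = (PP (m+1)).coeff j :=
        PP_stab (by omega) (by unfold nm at hj; omega)
      show (PP (j+1)).coeff j = _
      rw [h1]
  rw [Polynomial.eval_eq_sum_range' (show (PP (m+1)).natDegree < nm m + 1 by unfold nm; omega)]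
  apply Finset.sum_congr rfl
  intro j hj
  rw [hcoeff j (Finset.mem_range.mp hj)]

end Stmt5
end

open Filter Stmt5

theorem stmt_5 :
    ∃ a : ℕ → ℂ, ∀ f : C(Metric.sphere (0 : ℂ) 1, ℂ),
      ∃ n : ℕ → ℕ, StrictMono n ∧ (∀ k, 0 < n k) ∧
        ∀ z : Metric.sphere (0 : ℂ) 1,
          Tendsto (fun k : ℕ => ∑ j ∈ Finset.range (n k + 1), a j * (z : ℂ) ^ j)
            atTop (nhds (f z)) := by
  refine ⟨aa, fun f => ?_⟩
  -- choose good rational approximants for f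
  have hPex : ∀ k : ℕ, ∃ P, ∀ z : S1, ‖f z - fam P (z:ℂ)‖ ≤ 1/((k:ℝ)+1) :=
    fun k => dense_fam f _ (by positivity)
  choose P hPs using hPex
  have hiex : ∀ k, ∃ i, enum i = P k := fun k => enum_surj (P k)
  choose i hi using hiex
  -- stage sequence
  set ms : ℕ → ℕ := fun k =>
    Nat.rec (Nat.pair (i 0) 0) (fun k prev => Nat.pair (i (k+1)) (prev+1)) k with hms
  have hms_succ : ∀ k, ms (k+1) = Nat.pair (i (k+1)) (ms k + 1) := fun k => rfl
  have hms_mono : StrictMono ms := by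
    apply strictMono_nat_of_lt_succ
    intro k
    rw [hms_succ k]
    calc ms k < ms k + 1 := Nat.lt_succ_self _
      _ ≤ Nat.pair (i (k+1)) (ms k + 1) := Nat.right_le_pair _ _
  have hms_fst : ∀ k, (Nat.unpair (ms k)).1 = i k := by
    intro k
    cases k with
    | zero => show (Nat.unpair (Nat.pair (i 0) 0)).1 = i 0; rw [Nat.unpair_pair]
    | succ k => rw [hms_succ k, Nat.unpair_pair]
  have htgt : ∀ k, tgt (ms k) = fam (P k) := by
    intro k; unfold tgt; rw [hms_fst k, hi k]
  have hnm_mono : StrictMono nm := strictMono_nat_of_lt_succ nm_lt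
  refine ⟨fun k => nm (ms k), hnm_mono.comp hms_mono, fun k => nm_pos _, fun z => ?_⟩
  have hζ : ‖(z:ℂ)‖ = 1 := by
    have := z.2
    rwa [mem_sphere_zero_iff_norm] at this
  -- rewrite partial sums as PP evaluations
  have hsum : ∀ k, ∑ j ∈ Finset.range (nm (ms k) + 1), aa j * (z:ℂ)^j
      = (PP (ms k + 1)).eval (z:ℂ) := fun k => sum_eq (ms k) (z:ℂ)
  rw [tendsto_iff_norm_sub_tendsto_zero]
  have hev := circle_event hζ
  rw [eventually_atTop] at hev
  obtain ⟨M, hM⟩ := hev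
  apply squeeze_zero' (Filter.Eventually.of_forall (fun k => norm_nonneg _))
    (g := fun k : ℕ => 2/((k:ℝ)+1))
  · rw [eventually_atTop]
    refine ⟨M, fun k hk => ?_⟩
    have hmsk : M ≤ ms k := le_trans hk (hms_mono.le_apply)
    have hKS : (z:ℂ) ∈ KS (wc (ms k)) (δm (ms k)) := hM (ms k) hmsk
    have h1 := PP_spec (ms k) (z:ℂ) hKS
    have h2 : ‖tgt (ms k) (z:ℂ) - f z‖ ≤ 1/((k:ℝ)+1) := by
      rw [htgt k, norm_sub_rev]
      exact hPs k z
    have h3 : ‖∑ j ∈ Finset.range (nm (ms k) + 1), aa j * (z:ℂ)^j - f z‖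
        ≤ 1/((ms k : ℝ)+1) + 1/((k:ℝ)+1) := by
      rw [hsum k]
      calc ‖(PP (ms k + 1)).eval (z:ℂ) - f z‖
          = ‖((PP (ms k + 1)).eval (z:ℂ) - tgt (ms k) (z:ℂ)) + (tgt (ms k) (z:ℂ) - f z)‖ := by
            ring_nf
        _ ≤ ‖(PP (ms k + 1)).eval (z:ℂ) - tgt (ms k) (z:ℂ)‖ + ‖tgt (ms k) (z:ℂ) - f z‖ :=
            norm_add_le _ _
        _ ≤ 1/((ms k : ℝ)+1) + 1/((k:ℝ)+1) := add_le_add h1 h2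
    have h4 : 1/((ms k : ℝ)+1) ≤ 1/((k:ℝ)+1) := by
      apply one_div_le_one_div_of_le (by positivity)
      have : (k:ℝ) ≤ (ms k : ℝ) := Nat.cast_le.mpr hms_mono.le_apply
      linarith
    calc ‖∑ j ∈ Finset.range (nm (ms k) + 1), aa j * (z:ℂ)^j - f z‖
        ≤ 1/((ms k : ℝ)+1) + 1/((k:ℝ)+1) := h3
      _ ≤ 1/((k:ℝ)+1) + 1/((k:ℝ)+1) := by linarith
      _ = 2/((k:ℝ)+1) := by ring
  · have h5 := tendsto_one_div_add_atTop_nhds_zero_nat.const_mul (2:ℝ)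
    have h6 : (fun k : ℕ => 2 * (1/((k:ℝ)+1))) = fun k : ℕ => 2/((k:ℝ)+1) := by
      funext k; ring
    rw [h6] at h5
    simpa using h5
end

section
/- Let X be a metrizable topological vector space and A a linear subspace of ℂ^ℤ with its own complete metrizable vector topology, finer than the topology inherited from ℂ^ℤ (with the product topology), such that φ(ℤ) (finitely supported sequences) is dense in A. Let S : φ(ℤ) → X be linear such that S(U ∩ φ(ℤ)) is dense in X for every neighborhood U of 0 in A. Then there exists a ∈ A such that the symmetric partial sums ∑_{j=−n}^n a_j S(e_j) form a sequence whose set of values is dense in X; moreover, the set of such a is a dense G_δ subset of A. -/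
open Filter

theorem stmt_10 {X : Type*} [AddCommGroup X] [Module ℂ X] [TopologicalSpace X]
    [IsTopologicalAddGroup X] [ContinuousSMul ℂ X] [TopologicalSpace.MetrizableSpace X]
    {A : Type*} [AddCommGroup A] [Module ℂ A] [UniformSpace A] [IsUniformAddGroup A]
    [ContinuousSMul ℂ A] [CompleteSpace A] [TopologicalSpace.MetrizableSpace A]
    -- `A` is a linear subspace of `ℂ^ℤ`: a continuous linear injection into the product
    (ι : A →ₗ[ℂ] (ℤ → ℂ)) (hinj : Function.Injective ι) (hcont : Continuous ι)
    -- the finitely supported sequences `φ(ℤ)` form a dense subspace of `A`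
    (e : (ℤ →₀ ℂ) →ₗ[ℂ] A) (he : ∀ x : ℤ →₀ ℂ, ι (e x) = x)
    (hdense : Dense (Set.range e))
    -- `S : φ(ℤ) → X` linear with `S(U ∩ φ(ℤ))` dense for every neighborhood `U` of `0`
    (S : (ℤ →₀ ℂ) →ₗ[ℂ] X)
    (hS : ∀ U ∈ nhds (0 : A), Dense (S '' {x : ℤ →₀ ℂ | e x ∈ U})) :
    (∃ a : A, Dense {x : X | ∃ n : ℕ,
        x = ∑ j ∈ Finset.Icc (-(n : ℤ)) (n : ℤ), ι a j • S (Finsupp.single j 1)}) ∧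
    Dense {a : A | Dense {x : X | ∃ n : ℕ,
        x = ∑ j ∈ Finset.Icc (-(n : ℤ)) (n : ℤ), ι a j • S (Finsupp.single j 1)}} ∧
    IsGδ {a : A | Dense {x : X | ∃ n : ℕ,
        x = ∑ j ∈ Finset.Icc (-(n : ℤ)) (n : ℤ), ι a j • S (Finsupp.single j 1)}} := by
  classical
  set T : ℕ → A → X := fun n a => ∑ j ∈ Finset.Icc (-(n : ℤ)) (n : ℤ),
      ι a j • S (Finsupp.single j 1) with hT
  have hTcont : ∀ n, Continuous (T n) := by
    intro n
    apply continuous_finset_sum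
    intro j _
    exact ((continuous_apply j).comp hcont).smul continuous_const
  -- for a finitely supported sequence, the partial sums eventually equal S x
  have hSsum : ∀ x : ℤ →₀ ℂ, ∀ t : Finset ℤ, x.support ⊆ t →
      (∑ j ∈ t, x j • S (Finsupp.single j 1)) = S x := by
    intro x t ht
    rw [← Finset.sum_subset ht (fun j _ hj => by
      simp [Finsupp.notMem_support_iff.mp hj])]
    have hx : (∑ j ∈ x.support, Finsupp.single j (x j)) = x := Finsupp.sum_single x
    calc ∑ j ∈ x.support, x j • S (Finsupp.single j 1)
        = ∑ j ∈ x.support, S (Finsupp.single j (x j)) := by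
          refine Finset.sum_congr rfl fun j _ => ?_
          rw [← map_smul, Finsupp.smul_single, smul_eq_mul, mul_one]
      _ = S x := by rw [← map_sum, hx]
  have hTe : ∀ x : ℤ →₀ ℂ, ∃ n : ℕ, T n (e x) = S x := by
    intro x
    set N : ℕ := x.support.sup fun j => j.natAbs with hN
    refine ⟨N, ?_⟩
    have hsub : x.support ⊆ Finset.Icc (-(N : ℤ)) (N : ℤ) := by
      intro j hj
      have h2 : j.natAbs ≤ N := hN ▸ Finset.le_sup hj
      simp only [Finset.mem_Icc]
      omega
    have h3 : T N (e x) = ∑ j ∈ Finset.Icc (-(N : ℤ)) (N : ℤ),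
        x j • S (Finsupp.single j 1) := by
      simp [hT, he]
    rw [h3, hSsum x _ hsub]
  -- key density fact
  have key : ∀ V : Set X, IsOpen V → V.Nonempty → Dense (⋃ n, T n ⁻¹' V) := by
    intro V hV hVne
    rw [dense_iff_inter_open]
    intro W hW hWne
    obtain ⟨w, ⟨y, rfl⟩, hwW⟩ := hdense.exists_mem_open hW hWne
    have hUopen : IsOpen ((fun u : A => e y + u) ⁻¹' W) :=
      hW.preimage (continuous_const.add continuous_id)
    have hU : ((fun u : A => e y + u) ⁻¹' W) ∈ nhds (0 : A) :=
      hUopen.mem_nhds (by simpa using hwW)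
    have hV'open : IsOpen ((fun v : X => S y + v) ⁻¹' V) :=
      hV.preimage (continuous_const.add continuous_id)
    have hV'ne : ((fun v : X => S y + v) ⁻¹' V).Nonempty := by
      obtain ⟨v, hv⟩ := hVne
      exact ⟨v - S y, by simpa using hv⟩
    obtain ⟨z, ⟨x, hxU, rfl⟩, hzV⟩ :=
      (hS _ hU).exists_mem_open hV'open hV'ne
    obtain ⟨n, hn⟩ := hTe (y + x)
    refine ⟨e (y + x), ?_, Set.mem_iUnion.mpr ⟨n, ?_⟩⟩
    · simpa [map_add] using hxU
    · show T n (e (y + x)) ∈ V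
      rw [hn, map_add]
      exact hzV
  -- X is separable
  have hXsep : TopologicalSpace.SeparableSpace X := by
    have h1 : Dense (Set.range S) := by simpa using hS Set.univ Filter.univ_mem
    have h2 : Set.range S ⊆
        (Submodule.span ℂ (Set.range fun j : ℤ => S (Finsupp.single j 1)) : Set X) := by
      rintro _ ⟨x, rfl⟩
      rw [← hSsum x x.support (subset_refl _)]
      exact Submodule.sum_mem _ fun j _ =>
        Submodule.smul_mem _ _ (Submodule.subset_span ⟨j, rfl⟩)
    have hsep : TopologicalSpace.IsSeparable
        ((Submodule.span ℂ (Set.range fun j : ℤ => S (Finsupp.single j 1))) : Set X) :=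
      (Set.countable_range _).isSeparable.span
    have huniv : TopologicalSpace.IsSeparable (Set.univ : Set X) := by
      refine hsep.closure.mono ?_
      rw [← h1.closure_eq]
      exact closure_mono h2
    exact TopologicalSpace.isSeparable_univ_iff.mp huniv
  letI : MetricSpace X := TopologicalSpace.metrizableSpaceMetric X
  haveI : SecondCountableTopology X := UniformSpace.secondCountable_of_separable X
  obtain ⟨B, hBc, -, hB⟩ := TopologicalSpace.exists_countable_basis X
  -- rewrite the set as a countable intersection of open sets
  have hDeq : {a : A | Dense {x : X | ∃ n : ℕ,
      x = ∑ j ∈ Finset.Icc (-(n : ℤ)) (n : ℤ), ι a j • S (Finsupp.single j 1)}}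
      = ⋂ V ∈ {V ∈ B | V.Nonempty}, ⋃ n, T n ⁻¹' V := by
    ext a
    simp only [Set.mem_setOf_eq, Set.mem_iInter, Set.mem_sep_iff, Set.mem_iUnion,
      Set.mem_preimage, and_imp]
    rw [hB.dense_iff]
    constructor
    · intro h V hVB hVne
      obtain ⟨x, hxV, n, rfl⟩ := h V hVB hVne
      exact ⟨n, hxV⟩
    · intro h o hoB hone
      obtain ⟨n, hn⟩ := h o hoB hone
      exact ⟨T n a, hn, n, rfl⟩
  have hcnt : {V ∈ B | V.Nonempty}.Countable := hBc.mono (Set.sep_subset _ _)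
  have hopen : ∀ V ∈ {V ∈ B | V.Nonempty}, IsOpen (⋃ n, T n ⁻¹' V) := by
    rintro V ⟨hVB, -⟩
    exact isOpen_iUnion fun n => (hB.isOpen hVB).preimage (hTcont n)
  -- Baire category setup on A
  haveI : (uniformity A).IsCountablyGenerated := by
    rw [uniformity_eq_comap_nhds_zero A]
    infer_instance
  have hdenseD : Dense {a : A | Dense {x : X | ∃ n : ℕ,
      x = ∑ j ∈ Finset.Icc (-(n : ℤ)) (n : ℤ), ι a j • S (Finsupp.single j 1)}} := by
    rw [hDeq]
    exact dense_biInter_of_isOpen hopen hcnt fun V hV =>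
      key V (hB.isOpen hV.1) hV.2
  refine ⟨?_, hdenseD, ?_⟩
  · obtain ⟨a, ha⟩ := hdenseD.nonempty
    exact ⟨a, ha⟩
  · rw [hDeq]
    exact .biInter hcnt fun V hV => ((hopen V hV).isGδ)
end
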